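/- If A is a d×d real positive semi-definite symmetric matrix, B is a d×d real singular symmetric matrix with A + B positive semi-definite, and f(t) = (det(A + tB))^(1/(d-1)), then f(t) ≤ f(0) + t·f'(0) for all t ∈ [0,1], where f'(0) is the right derivative at 0 (assuming A is positive definite so that f is differentiable at 0). -/

import Mathlib

open Matrix Finset Set

/-- Superadditivity of the weighted geometric mean. -/
lemma stmt2_geom_superadd {ι : Type*} (s : Finset ι) (w u v : ι → ℝ)
    (hw : ∀ i ∈ s, 0 < w i) (hw1 : ∑ i ∈ s, w i = 1)
    (hu : ∀ i ∈ s, 0 ≤ u i) (hv : ∀ i ∈ s, 0 ≤ v i) :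
    (∏ i ∈ s, u i ^ w i) + (∏ i ∈ s, v i ^ w i) ≤ ∏ i ∈ s, (u i + v i) ^ w i := by
  by_cases hz : ∀ i ∈ s, 0 < u i + v i
  · have hP : 0 < ∏ i ∈ s, (u i + v i) ^ w i :=
      Finset.prod_pos fun i hi => Real.rpow_pos_of_pos (hz i hi) _
    have key : ∀ z : ι → ℝ, (∀ i ∈ s, 0 ≤ z i) →
        (∏ i ∈ s, z i ^ w i) ≤ (∏ i ∈ s, (u i + v i) ^ w i) *
          ∑ i ∈ s, w i * (z i / (u i + v i)) := by
      intro z hznn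
      have hgm := Real.geom_mean_le_arith_mean_weighted s w (fun i => z i / (u i + v i))
        (fun i hi => (hw i hi).le) hw1
        (fun i hi => div_nonneg (hznn i hi) (hz i hi).le)
      have hprod : ∏ i ∈ s, (z i / (u i + v i)) ^ w i
          = (∏ i ∈ s, z i ^ w i) / ∏ i ∈ s, (u i + v i) ^ w i := by
        rw [← Finset.prod_div_distrib]
        exact Finset.prod_congr rfl fun i hi =>
          Real.div_rpow (hznn i hi) (hz i hi).le _
      rw [hprod, div_le_iff₀ hP] at hgm
      calc (∏ i ∈ s, z i ^ w i) ≤ (∑ i ∈ s, w i * (z i / (u i + v i))) *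
            ∏ i ∈ s, (u i + v i) ^ w i := hgm
        _ = _ := by ring
    have h1 := key u hu
    have h2 := key v hv
    have hsum : (∑ i ∈ s, w i * (u i / (u i + v i)))
        + (∑ i ∈ s, w i * (v i / (u i + v i))) = 1 := by
      rw [← Finset.sum_add_distrib, ← hw1]
      refine Finset.sum_congr rfl fun i hi => ?_
      have h := (hz i hi).ne'
      field_simp
    nlinarith [hP]
  · push_neg at hz
    obtain ⟨i, hi, hle⟩ := hz
    have h0 : u i + v i = 0 := le_antisymm hle (add_nonneg (hu i hi) (hv i hi))
    have hui : u i = 0 := le_antisymm (by linarith [hv i hi]) (hu i hi)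
    have hvi : v i = 0 := le_antisymm (by linarith [hu i hi]) (hv i hi)
    have e1 : (∏ j ∈ s, u j ^ w j) = 0 :=
      Finset.prod_eq_zero hi (by rw [hui]; exact Real.zero_rpow (hw i hi).ne')
    have e2 : (∏ j ∈ s, v j ^ w j) = 0 :=
      Finset.prod_eq_zero hi (by rw [hvi]; exact Real.zero_rpow (hw i hi).ne')
    have e3 : (∏ j ∈ s, (u j + v j) ^ w j) = 0 :=
      Finset.prod_eq_zero hi (by rw [h0]; exact Real.zero_rpow (hw i hi).ne')
    rw [e1, e2, e3]; norm_num

/-- The geometric mean of nonnegative affine functions is concave. -/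
lemma stmt2_prodpow_concave {ι : Type*} (s : Finset ι) (w : ℝ) (hw : 0 < w)
    (hw1 : (s.card : ℝ) * w = 1) (μ : ι → ℝ) (c : ℝ) (hc : 0 ≤ c)
    (D : Set ℝ) (hD : Convex ℝ D) (hpos : ∀ t ∈ D, ∀ i ∈ s, 0 ≤ 1 + t * μ i) :
    ConcaveOn ℝ D (fun t => c * ∏ i ∈ s, (1 + t * μ i) ^ w) := by
  have hwsum : ∑ _i ∈ s, w = 1 := by rwa [Finset.sum_const, nsmul_eq_mul]
  refine ⟨hD, ?_⟩
  intro x hx y hy a b ha hb hab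
  simp only [smul_eq_mul]
  have hfac : ∀ i, 1 + (a * x + b * y) * μ i = a * (1 + x * μ i) + b * (1 + y * μ i) := by
    intro i; linear_combination (1 + (x + y) * μ i - x * μ i - y * μ i) * hab.symm
  rcases eq_or_lt_of_le ha with ha0 | ha0
  · subst ha0
    have hb1 : b = 1 := by linarith
    subst hb1; simp
  rcases eq_or_lt_of_le hb with hb0 | hb0
  · subst hb0
    have ha1 : a = 1 := by linarith
    subst ha1; simp
  have hkey := stmt2_geom_superadd s (fun _ => w) (fun i => a * (1 + x * μ i))
      (fun i => b * (1 + y * μ i)) (fun i _ => hw) hwsum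
      (fun i hi => mul_nonneg ha (hpos x hx i hi))
      (fun i hi => mul_nonneg hb (hpos y hy i hi))
  beta_reduce at hkey
  have hextract : ∀ (e : ℝ) (z : ℝ), 0 < e → (∀ i ∈ s, 0 ≤ 1 + z * μ i) →
      (∏ i ∈ s, (e * (1 + z * μ i)) ^ w) = e * ∏ i ∈ s, (1 + z * μ i) ^ w := by
    intro e z he hz
    rw [show (∏ i ∈ s, (e * (1 + z * μ i)) ^ w) = ∏ i ∈ s, e ^ w * (1 + z * μ i) ^ w from
      Finset.prod_congr rfl fun i hi => Real.mul_rpow he.le (hz i hi),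
      Finset.prod_mul_distrib, Finset.prod_const, ← Real.rpow_natCast (e ^ w) s.card,
      ← Real.rpow_mul he.le, mul_comm w, hw1, Real.rpow_one]
  rw [hextract a x ha0 (hpos x hx), hextract b y hb0 (hpos y hy)] at hkey
  have hrw : (∏ i ∈ s, (1 + (a * x + b * y) * μ i) ^ w)
      = ∏ i ∈ s, (a * (1 + x * μ i) + b * (1 + y * μ i)) ^ w :=
    Finset.prod_congr rfl fun i _ => by rw [hfac i]
  calc a * (c * ∏ i ∈ s, (1 + x * μ i) ^ w) + b * (c * ∏ i ∈ s, (1 + y * μ i) ^ w)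
      = c * ((a * ∏ i ∈ s, (1 + x * μ i) ^ w) + b * ∏ i ∈ s, (1 + y * μ i) ^ w) := by ring
    _ ≤ c * ∏ i ∈ s, (1 + (a * x + b * y) * μ i) ^ w := by
        rw [hrw]; exact mul_le_mul_of_nonneg_left hkey hc

theorem stmt2 (d : ℕ) (hd : 2 ≤ d)
    (A B : Matrix (Fin d) (Fin d) ℝ)
    (hA : A.PosDef) (hBsymm : B.IsSymm) (hBsing : B.det = 0)
    (hAB : (A + B).PosSemidef)
    (f : ℝ → ℝ) (hf : f = fun t : ℝ => (A + t • B).det ^ ((1 : ℝ) / (d - 1)))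
    (f'0 : ℝ) (hder : HasDerivWithinAt f f'0 (Set.Ici (0:ℝ)) 0) :
    ∀ t ∈ Set.Icc (0:ℝ) 1, f t ≤ f 0 + t * f'0 := by
  have hAps := hA.posSemidef
  open scoped MatrixOrder in
  set C := CFC.sqrt A with hCdef
  open scoped MatrixOrder in
  have hCps : C.PosSemidef := (CFC.sqrt_nonneg A).posSemidef
  have hCsym : C.IsHermitian := hCps.1
  open scoped MatrixOrder in
  have hCC : C * C = A := CFC.sqrt_mul_sqrt_self A hAps.nonneg
  have hdetC : C.det ≠ 0 := by
    intro h
    have : A.det = 0 := by rw [← hCC, det_mul, h, mul_zero]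
    exact hA.det_pos.ne' this
  have hCu : IsUnit C.det := hdetC.isUnit
  have hCinv : C * C⁻¹ = 1 := mul_nonsing_inv _ hCu
  have hinvC : C⁻¹ * C = 1 := nonsing_inv_mul _ hCu
  have hCisym : (C⁻¹).IsHermitian := hCsym.inv
  set M := C⁻¹ * B * C⁻¹ with hMdef
  have hMsym : M.IsHermitian := by
    have h : Mᴴ = (C⁻¹)ᴴ * Bᴴ * (C⁻¹)ᴴ := by
      rw [hMdef, conjTranspose_mul, conjTranspose_mul, mul_assoc]
    rw [IsHermitian, h, hCisym.eq,
      show Bᴴ = B by rw [conjTranspose_eq_transpose_of_trivial]; exact hBsymm]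
  set μ := hMsym.eigenvalues with hμdef
  -- conjugation identity
  have hconj : ∀ t : ℝ, A + t • B = C * (1 + t • M) * C := by
    intro t
    have hCMC : C * M * C = B := by
      rw [hMdef, ← mul_assoc, ← mul_assoc, hCinv, one_mul, mul_assoc, hinvC, mul_one]
    calc A + t • B = C * C + t • (C * M * C) := by rw [hCC, hCMC]
      _ = C * (1 + t • M) * C := by
          simp [mul_add, add_mul, mul_smul_comm, smul_mul_assoc]
  -- determinant identity
  have hdet1M : ∀ t : ℝ, (1 + t • M).det = ∏ i, (1 + t * μ i) := by
    intro t
    set Uc : Matrix (Fin d) (Fin d) ℝ := ↑(hMsym.eigenvectorUnitary) with hU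
    have hUU : star Uc * Uc = 1 := hMsym.eigenvectorUnitary.2.1
    have hUU2 : Uc * star Uc = 1 := hMsym.eigenvectorUnitary.2.2
    have hdiag : star Uc * M * Uc = Matrix.diagonal (RCLike.ofReal ∘ μ) := by
      rw [← hMsym.conjStarAlgAut_star_eigenvectorUnitary, Unitary.conjStarAlgAut_star_apply]
    have h1 : star Uc * (1 + t • M) * Uc = Matrix.diagonal (fun i => 1 + t * μ i) := by
      rw [mul_add, add_mul, mul_one, hUU, mul_smul_comm, smul_mul_assoc, hdiag]
      ext i j
      by_cases h : i = j <;>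
        simp [Matrix.diagonal, h, Matrix.one_apply, Matrix.add_apply, Matrix.smul_apply]
    have h2 : (star Uc * (1 + t • M) * Uc).det = (1 + t • M).det := by
      rw [det_mul, det_mul, mul_comm, ← mul_assoc, ← det_mul, hUU2, det_one, one_mul]
    rw [← h2, h1, det_diagonal]
  have hdet : ∀ t : ℝ, (A + t • B).det = A.det * ∏ i, (1 + t * μ i) := by
    intro t
    rw [hconj t, det_mul, det_mul, hdet1M t, mul_comm C.det, mul_assoc, mul_comm _ C.det,
      ← det_mul, hCC, mul_comm]
  -- eigenvalue bounds
  have hpsd1M : (1 + M).PosSemidef := by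
    have hid : C⁻¹ * A * C⁻¹ = 1 := by
      rw [← hCC, ← mul_assoc, mul_assoc C⁻¹ C C, ← mul_assoc C⁻¹ C, hinvC, one_mul, hCinv]
    have h1M : 1 + M = C⁻¹ * (A + B) * C⁻¹ := by
      rw [hMdef, mul_add, add_mul, hid]
    have h := hAB.conjTranspose_mul_mul_same C⁻¹
    rwa [hCisym.eq, ← h1M] at h
  have hμge : ∀ i, -1 ≤ μ i := by
    intro i
    set v : Fin d → ℝ := ⇑(hMsym.eigenvectorBasis i) with hv
    have hMv : M *ᵥ v = μ i • v := hMsym.mulVec_eigenvectorBasis i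
    have hvv : dotProduct v v = 1 := by
      have hn : ‖hMsym.eigenvectorBasis i‖ = 1 := hMsym.eigenvectorBasis.orthonormal.1 i
      have h : (inner ℝ (hMsym.eigenvectorBasis i) (hMsym.eigenvectorBasis i) : ℝ) = 1 := by
        rw [real_inner_self_eq_norm_sq, hn]; norm_num
      rw [← h]
      simp only [PiLp.inner_apply, dotProduct, RCLike.inner_apply, conj_trivial]
      rfl
    have h := hpsd1M.dotProduct_mulVec_nonneg v
    rw [add_mulVec, one_mulVec, hMv, dotProduct_add, dotProduct_smul] at h
    have hsv : star v = v := by simp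
    rw [hsv, hvv, smul_eq_mul] at h
    linarith
  -- a vanishing eigenvalue
  have hdetM : M.det = 0 := by
    rw [hMdef, det_mul, det_mul, hBsing, mul_zero, zero_mul]
  have hprodμ : ∏ i, μ i = 0 := by
    have := hMsym.det_eq_prod_eigenvalues
    simpa [hdetM] using this.symm
  obtain ⟨i₀, -, hi₀⟩ := Finset.prod_eq_zero_iff.mp hprodμ
  set s : Finset (Fin d) := Finset.univ.erase i₀ with hs
  set w : ℝ := (1 : ℝ) / (d - 1) with hwdef
  have hd1 : (1:ℝ) ≤ (d:ℝ) - 1 := by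
    have : (2:ℝ) ≤ (d:ℝ) := by exact_mod_cast hd
    linarith
  have hwpos : 0 < w := by rw [hwdef]; positivity
  have hcard : (s.card : ℝ) * w = 1 := by
    rw [hs, Finset.card_erase_of_mem (Finset.mem_univ i₀), Finset.card_univ, Fintype.card_fin]
    rw [Nat.cast_sub (by omega), Nat.cast_one, hwdef]
    field_simp
  -- nonnegativity of factors on [0,1]
  have hfacnn : ∀ t ∈ Set.Icc (0:ℝ) 1, ∀ i, 0 ≤ 1 + t * μ i := by
    intro t ht i
    nlinarith [hμge i, ht.1, ht.2]
  -- product formula for f on [0,1]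
  have hfprod : ∀ t ∈ Set.Icc (0:ℝ) 1,
      f t = A.det ^ w * ∏ i ∈ s, (1 + t * μ i) ^ w := by
    intro t ht
    have hpu : ∏ i, (1 + t * μ i) = ∏ i ∈ s, (1 + t * μ i) := by
      rw [← Finset.prod_erase_mul Finset.univ _ (Finset.mem_univ i₀), hi₀, mul_zero,
        add_zero, mul_one]
    rw [hf]
    dsimp only
    rw [hdet t, hpu,
      Real.mul_rpow hA.det_pos.le (Finset.prod_nonneg fun i _ => hfacnn t ht i),
      ← Real.finset_prod_rpow s _ (fun i _ => hfacnn t ht i) w]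
  -- concavity on [0,1]
  have hg := stmt2_prodpow_concave s w hwpos hcard μ (A.det ^ w)
    (Real.rpow_nonneg hA.det_pos.le w) (Set.Icc 0 1) (convex_Icc 0 1)
    (fun t ht i _ => hfacnn t ht i)
  have hconc : ConcaveOn ℝ (Set.Icc (0:ℝ) 1) f :=
    hg.congr fun t ht => (hfprod t ht).symm
  -- conclude via the tangent line at 0
  intro t ht
  rcases eq_or_lt_of_le ht.1 with h0 | h0
  · rw [← h0]; simp
  · have hD : HasDerivWithinAt (-f) (-f'0) (Set.Ioi (0:ℝ)) 0 :=
      (hder.mono Set.Ioi_subset_Ici_self).neg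
    have h1 : -f'0 ≤ slope (-f) 0 t :=
      (hconc.neg).le_slope_of_hasDerivWithinAt_Ioi
        ⟨le_refl 0, zero_le_one⟩ ht h0 hD
    rw [slope_neg_fun] at h1
    have h2 : slope f 0 t ≤ f'0 := by
      have := neg_le_neg h1
      simpa using this
    rw [slope_def_field] at h2
    rw [sub_zero] at h2
    rw [div_le_iff₀ h0] at h2
    linarith
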